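/- Let (X, F) be a well-graded family with ∅ ∈ F and additionality r. Then for every nonempty set U of members of F, letting st(U) = ⋃_{A ∈ U} A and below(U) = {B ∈ F : ∃ A ∈ U, B ⊆ A}, we have |st(U)| + 1 ≤ |below(U)| ≤ |st(U)| + r. -/

import Mathlib

/-- The one-inclusion graph of a set system. -/
def oneInclusion {α : Type*} [DecidableEq α] (F : Finset (Finset α)) :
    SimpleGraph {A : Finset α // A ∈ F} where
  Adj A B := (symmDiff A.1 B.1).card = 1
  symm := by
    constructor
    intro A B h
    rwa [symmDiff_comm] at h
  loopless := by
    constructor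
    intro A h
    simp [symmDiff_self] at h

/-- A set system is well-graded if the Hamming distance between any two members
equals their distance in the one-inclusion graph. -/
def WellGraded {α : Type*} [DecidableEq α] (F : Finset (Finset α)) : Prop :=
  ∀ A B : {A : Finset α // A ∈ F},
    (oneInclusion F).dist A B = (symmDiff A.1 B.1).card

/-- The set of essential elements of the domain. -/
def essSet {α : Type*} [DecidableEq α] [Fintype α] (F : Finset (Finset α)) :
    Finset α :=
  Finset.univ.filter (fun x => (∃ A ∈ F, x ∈ A) ∧ ∃ B ∈ F, x ∉ B)

lemma wg_accessible {α : Type*} [DecidableEq α] (F : Finset (Finset α))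
    (hWG : WellGraded F) (h0 : ∅ ∈ F) :
    ∀ A ∈ F, A ≠ ∅ → ∃ x ∈ A, A.erase x ∈ F := by
  intro A hA hAne
  have hsd : ∀ C : Finset α, symmDiff C (∅ : Finset α) = C := by
    intro C; simp [symmDiff]
  have hd : (oneInclusion F).dist ⟨A, hA⟩ ⟨∅, h0⟩ = A.card := by
    rw [hWG]; rw [hsd]
  have hpos : A.card ≠ 0 := by simp [Finset.card_eq_zero]; exact hAne
  obtain ⟨p, hp⟩ := SimpleGraph.exists_walk_of_dist_ne_zero (by rw [hd]; exact hpos)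
  have hne : (⟨A, hA⟩ : {A // A ∈ F}) ≠ ⟨∅, h0⟩ := by
    intro h; exact hAne (congrArg Subtype.val h)
  obtain ⟨B, hadj, q, hq⟩ := p.exists_eq_cons_of_ne hne
  have hqlen : q.length = A.card - 1 := by
    have := hp
    rw [hq] at this
    simp [SimpleGraph.Walk.length_cons] at this
    omega
  have hBcard : B.1.card ≤ A.card - 1 := by
    have h1 : (oneInclusion F).dist B ⟨∅, h0⟩ ≤ q.length := SimpleGraph.dist_le q
    rw [hWG, hsd] at h1
    omega
  -- hadj : (oneInclusion F).Adj ⟨A, hA⟩ B, i.e. (symmDiff A B.1).card = 1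
  have hone : (symmDiff A B.1).card = 1 := hadj
  obtain ⟨x, hx⟩ := Finset.card_eq_one.mp hone
  have hxmem : x ∈ symmDiff A B.1 := by rw [hx]; exact Finset.mem_singleton_self x
  rw [Finset.mem_symmDiff] at hxmem
  rcases hxmem with ⟨hxA, hxB⟩ | ⟨hxB, hxA⟩
  · refine ⟨x, hxA, ?_⟩
    have hBeq : B.1 = A.erase x := by
      ext y
      constructor
      · intro hy
        by_cases hyA : y ∈ A
        · exact Finset.mem_erase.mpr ⟨fun h => hxB (h ▸ hy), hyA⟩
        · exfalso
          have : y ∈ symmDiff A B.1 := Finset.mem_symmDiff.mpr (Or.inr ⟨hy, hyA⟩)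
          rw [hx, Finset.mem_singleton] at this
          exact hxB (this ▸ hy)
      · intro hy
        obtain ⟨hyx, hyA⟩ := Finset.mem_erase.mp hy
        by_contra hyB
        have : y ∈ symmDiff A B.1 := Finset.mem_symmDiff.mpr (Or.inl ⟨hyA, hyB⟩)
        rw [hx, Finset.mem_singleton] at this
        exact hyx this
    rw [← hBeq]; exact B.2
  · exfalso
    have hsub : A ⊆ B.1 := by
      intro y hy
      by_contra hyB
      have : y ∈ symmDiff A B.1 := Finset.mem_symmDiff.mpr (Or.inl ⟨hy, hyB⟩)
      rw [hx, Finset.mem_singleton] at this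
      exact hxA (this ▸ hy)
    have : A.card < B.1.card := Finset.card_lt_card (Finset.ssubset_iff_of_subset hsub |>.mpr ⟨x, hxB, hxA⟩)
    have hA1 : 1 ≤ A.card := Nat.one_le_iff_ne_zero.mpr hpos
    omega

lemma key_lemma {α : Type*} [DecidableEq α] (F : Finset (Finset α)) :
    ∀ D : Finset (Finset α), D ⊆ F → ∅ ∈ D →
    (∀ B ∈ F, B ≠ ∅ → ∃ x ∈ B, B.erase x ∈ F) →
    (∀ B ∈ F, ∀ A ∈ D, B ⊆ A → B ∈ D) →
    (F.sup id \ D.sup id).card ≤ (F \ D).card := by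
  induction F using Finset.strongInduction with
  | _ F ih =>
    intro D hDF h0 hacc hdown
    obtain ⟨M, hMF, hMmax⟩ := F.exists_max_image Finset.card ⟨∅, hDF h0⟩
    by_cases hM : M = ∅
    · have hsup : F.sup id = ∅ := by
        apply Finset.subset_empty.mp
        intro y hy
        obtain ⟨B, hB, hyB⟩ := Finset.mem_sup.mp hy
        have : B.card ≤ M.card := hMmax B hB
        rw [hM] at this
        simp at this
        rw [this] at hyB
        exact absurd hyB (Finset.notMem_empty y)
      simp [hsup]
    · obtain ⟨x, hx, hMx⟩ := hacc M hMF hM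
      have hexcard : (M.erase x).card < M.card := Finset.card_erase_lt_of_mem hx
      have hexne : M.erase x ≠ M := fun h => by rw [h] at hexcard; omega
      set F' := F.erase M with hF'
      have hFF' : F' ⊂ F := Finset.erase_ssubset hMF
      have hMxF' : M.erase x ∈ F' := Finset.mem_erase.mpr ⟨hexne, hMx⟩
      have hacc' : ∀ B ∈ F', B ≠ ∅ → ∃ y ∈ B, B.erase y ∈ F' := by
        intro B hB hBne
        obtain ⟨y, hy, hBy⟩ := hacc B (Finset.mem_of_mem_erase hB) hBne
        refine ⟨y, hy, Finset.mem_erase.mpr ⟨?_, hBy⟩⟩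
        intro h
        have h1 : (B.erase y).card < B.card := Finset.card_erase_lt_of_mem hy
        have h2 : B.card ≤ M.card := hMmax B (Finset.mem_of_mem_erase hB)
        rw [h] at h1; omega
      -- sup of F is almost covered by sup of F'
      have hcover : ∀ y ∈ F.sup id, y ≠ x → y ∈ F'.sup id := by
        intro y hy hyx
        obtain ⟨B, hB, hyB⟩ := Finset.mem_sup.mp hy
        by_cases hBM : B = M
        · exact Finset.mem_sup.mpr ⟨M.erase x, hMxF',
            Finset.mem_erase.mpr ⟨hyx, hBM ▸ hyB⟩⟩
        · exact Finset.mem_sup.mpr ⟨B, Finset.mem_erase.mpr ⟨hBM, hB⟩, hyB⟩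
      by_cases hMD : M ∈ D
      · set D' := D.erase M with hD'
        have h0' : ∅ ∈ D' := Finset.mem_erase.mpr ⟨fun h => hM h.symm, h0⟩
        have hD'F' : D' ⊆ F' := Finset.erase_subset_erase M hDF
        have hdown' : ∀ B ∈ F', ∀ A ∈ D', B ⊆ A → B ∈ D' := by
          intro B hB A hA hBA
          exact Finset.mem_erase.mpr ⟨(Finset.mem_erase.mp hB).1,
            hdown B (Finset.mem_of_mem_erase hB) A (Finset.mem_of_mem_erase hA) hBA⟩
        have IH := ih F' hFF' D' hD'F' h0' hacc' hdown'
        have hsd : F' \ D' = F \ D := by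
          ext B
          simp only [Finset.mem_sdiff, Finset.mem_erase, hF', hD']
          constructor
          · rintro ⟨⟨hne, hBF⟩, h⟩
            exact ⟨hBF, fun hBD => h ⟨hne, hBD⟩⟩
          · rintro ⟨hBF, hBD⟩
            exact ⟨⟨fun h => hBD (h ▸ hMD), hBF⟩, fun hc => hBD hc.2⟩
        have hsub : F.sup id \ D.sup id ⊆ F'.sup id \ D'.sup id := by
          intro y hy
          obtain ⟨hyF, hyD⟩ := Finset.mem_sdiff.mp hy
          have hyx : y ≠ x := by
            intro h
            exact hyD (h ▸ Finset.mem_sup.mpr ⟨M, hMD, hx⟩)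
          refine Finset.mem_sdiff.mpr ⟨hcover y hyF hyx, fun hc => hyD ?_⟩
          obtain ⟨A, hA, hyA⟩ := Finset.mem_sup.mp hc
          exact Finset.mem_sup.mpr ⟨A, Finset.mem_of_mem_erase hA, hyA⟩
        calc (F.sup id \ D.sup id).card ≤ (F'.sup id \ D'.sup id).card :=
              Finset.card_le_card hsub
          _ ≤ (F' \ D').card := IH
          _ = (F \ D).card := by rw [hsd]
      · have hDF' : D ⊆ F' := fun B hB =>
          Finset.mem_erase.mpr ⟨fun h => hMD (h ▸ hB), hDF hB⟩
        have hdown' : ∀ B ∈ F', ∀ A ∈ D, B ⊆ A → B ∈ D := fun B hB A hA hBA =>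
          hdown B (Finset.mem_of_mem_erase hB) A hA hBA
        have IH := ih F' hFF' D hDF' h0 hacc' hdown'
        have hsd : F' \ D = (F \ D).erase M := by
          rw [hF', Finset.erase_sdiff_comm]
        have hMFD : M ∈ F \ D := Finset.mem_sdiff.mpr ⟨hMF, hMD⟩
        have hcard : (F' \ D).card = (F \ D).card - 1 := by
          rw [hsd, Finset.card_erase_of_mem hMFD]
        have hsub : F.sup id \ D.sup id ⊆ insert x (F'.sup id \ D.sup id) := by
          intro y hy
          obtain ⟨hyF, hyD⟩ := Finset.mem_sdiff.mp hy
          by_cases hyx : y = x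
          · rw [hyx]; exact Finset.mem_insert_self x _
          · exact Finset.mem_insert_of_mem (Finset.mem_sdiff.mpr ⟨hcover y hyF hyx, hyD⟩)
        have h1 : (F \ D).card ≥ 1 := Finset.card_pos.mpr ⟨M, hMFD⟩
        calc (F.sup id \ D.sup id).card
            ≤ (insert x (F'.sup id \ D.sup id)).card := Finset.card_le_card hsub
          _ ≤ (F'.sup id \ D.sup id).card + 1 := Finset.card_insert_le _ _
          _ ≤ (F' \ D).card + 1 := by omega
          _ = (F \ D).card := by omega


lemma essSet_eq_sup {α : Type*} [DecidableEq α] [Fintype α]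
    (F : Finset (Finset α)) (h0 : ∅ ∈ F) : essSet F = F.sup id := by
  ext x
  simp only [essSet, Finset.mem_filter, Finset.mem_univ, true_and, Finset.mem_sup, id]
  constructor
  · exact fun h => h.1
  · exact fun h => ⟨h, ⟨∅, h0, Finset.notMem_empty x⟩⟩

/-- Let `(X, F)` be well-graded with `∅ ∈ F` and additionality `r`. For every
nonempty set `U` of members of `F`, with `st(U)` the union of the members of
`U` and `below(U)` the set of members of `F` contained in some member of `U`,
we have `|st(U)| + 1 ≤ |below(U)| ≤ |st(U)| + r`. -/
theorem below_card_bounds {α : Type*} [DecidableEq α] [Fintype α]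
    (F : Finset (Finset α)) (hWG : WellGraded F) (h0 : ∅ ∈ F)
    (r : ℕ) (hr : F.card = (essSet F).card + r)
    (U : Finset (Finset α)) (hUF : U ⊆ F) (hU : U.Nonempty) :
    (U.sup id).card + 1 ≤ (F.filter (fun B => ∃ A ∈ U, B ⊆ A)).card ∧
      (F.filter (fun B => ∃ A ∈ U, B ⊆ A)).card ≤ (U.sup id).card + r := by
  classical
  set L := F.filter (fun B => ∃ A ∈ U, B ⊆ A) with hL
  have hLF : L ⊆ F := Finset.filter_subset _ _
  obtain ⟨A₀, hA₀⟩ := hU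
  have h0L : ∅ ∈ L :=
    Finset.mem_filter.mpr ⟨h0, A₀, hA₀, Finset.empty_subset A₀⟩
  have haccF : ∀ B ∈ F, B ≠ ∅ → ∃ x ∈ B, B.erase x ∈ F := wg_accessible F hWG h0
  have haccL : ∀ B ∈ L, B ≠ ∅ → ∃ x ∈ B, B.erase x ∈ L := by
    intro B hB hBne
    obtain ⟨hBF, A, hA, hBA⟩ := Finset.mem_filter.mp hB
    obtain ⟨x, hx, hBx⟩ := haccF B hBF hBne
    exact ⟨x, hx, Finset.mem_filter.mpr ⟨hBx, A, hA,
      (Finset.erase_subset x B).trans hBA⟩⟩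
  have hsupL : L.sup id = U.sup id := by
    apply le_antisymm
    · apply Finset.sup_le
      intro B hB
      obtain ⟨hBF, A, hA, hBA⟩ := Finset.mem_filter.mp hB
      exact le_trans (Finset.le_iff_subset.mpr hBA) (Finset.le_sup (f := id) hA)
    · apply Finset.sup_le
      intro A hA
      exact Finset.le_sup (Finset.mem_filter.mpr ⟨hUF hA, A, hA, subset_rfl⟩)
  -- lower bound
  have hsing : ({∅} : Finset (Finset α)) ⊆ L := Finset.singleton_subset_iff.mpr h0L
  have low := key_lemma L {∅} hsing (Finset.mem_singleton_self ∅) haccL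
    (by
      intro B hB A hA hBA
      rw [Finset.mem_singleton] at hA
      rw [Finset.mem_singleton]
      exact Finset.subset_empty.mp (hA ▸ hBA))
  rw [Finset.sup_singleton] at low
  have hid : (id (∅ : Finset α)) = (∅ : Finset α) := rfl
  rw [hid, Finset.sdiff_empty, hsupL] at low
  have hcard1 : (L \ {∅}).card = L.card - 1 := by
    rw [Finset.card_sdiff_of_subset hsing, Finset.card_singleton]
  have hL1 : 1 ≤ L.card := Finset.card_pos.mpr ⟨∅, h0L⟩
  -- upper bound
  have hdownL : ∀ B ∈ F, ∀ A ∈ L, B ⊆ A → B ∈ L := by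
    intro B hB A hA hBA
    obtain ⟨hAF, A', hA', hAA'⟩ := Finset.mem_filter.mp hA
    exact Finset.mem_filter.mpr ⟨hB, A', hA', hBA.trans hAA'⟩
  have up := key_lemma F L hLF h0L haccF hdownL
  have hsupsub : L.sup id ⊆ F.sup id :=
    Finset.le_iff_subset.mp (Finset.sup_mono hLF)
  have h1 : (F.sup id \ L.sup id).card = (F.sup id).card - (L.sup id).card :=
    Finset.card_sdiff_of_subset hsupsub
  have h2 : (F \ L).card = F.card - L.card := Finset.card_sdiff_of_subset hLF
  have h3 : (L.sup id).card ≤ (F.sup id).card := Finset.card_le_card hsupsub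
  have h4 : L.card ≤ F.card := Finset.card_le_card hLF
  have hess : (essSet F).card = (F.sup id).card := by rw [essSet_eq_sup F h0]
  rw [h1, h2, hsupL] at up
  rw [hess] at hr
  rw [hcard1] at low
  exact ⟨by omega, by omega⟩
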